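/- Let n, m ≥ 1, a⁺, a⁻ : Fin n → Fin m → [0,1], and b : Fin n → (0,1]. The system of equations ⋁_{j} ((a⁺_{ij} · x_j) ⊔ (a⁻_{ij} · n_P(x_j))) = b_i for all i ∈ Fin n is solvable (i.e., there exists x : Fin m → [0,1] satisfying all n equations simultaneously) if and only if there exist disjoint subsets J⁺, J⁻ ⊆ Fin m such that for every i ∈ Fin n, either (1) there exists j ∈ J⁺ with a⁺_{ij} ≥ b_i and (b_i ←_P a⁺_{ij}) ≤ (b_h ←_P a⁺_{hj}) for all h ∈ Fin n, or (2) there exists j ∈ J⁻ with a⁻_{ij} = b_i and a⁻_{hj} ≤ b_h for all h ∈ Fin n. -/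

import Mathlib

open Set

noncomputable def nP (x : ℝ) : ℝ := if x = 0 then 1 else 0

noncomputable def resP (z a : ℝ) : ℝ := if a = 0 then 1 else min 1 (z / a)

noncomputable def bSup {m : ℕ} (hm : 1 ≤ m) (f : Fin m → ℝ) : ℝ :=
  Finset.univ.sup' ⟨⟨0, hm⟩, Finset.mem_univ _⟩ f

noncomputable def bInf {m : ℕ} (hm : 1 ≤ m) (f : Fin m → ℝ) : ℝ :=
  Finset.univ.inf' ⟨⟨0, hm⟩, Finset.mem_univ _⟩ f

lemma resP_nonneg {z a : ℝ} (hz : 0 ≤ z) (ha : 0 ≤ a) : 0 ≤ resP z a := by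
  unfold resP; split
  · norm_num
  · exact le_min zero_le_one (div_nonneg hz ha)

lemma resP_le_one (z a : ℝ) : resP z a ≤ 1 := by
  unfold resP; split
  · exact le_refl 1
  · exact min_le_left _ _

lemma resP_pos {z a : ℝ} (hz : 0 < z) (ha : 0 ≤ a) : 0 < resP z a := by
  unfold resP; split
  · norm_num
  · exact lt_min one_pos (div_pos hz (lt_of_le_of_ne ha (Ne.symm (by assumption))))

lemma resP_adj {a x z : ℝ} (ha : 0 ≤ a) (hx0 : 0 ≤ x) (hx1 : x ≤ 1) (hz : 0 ≤ z) :
    a * x ≤ z ↔ x ≤ resP z a := by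
  unfold resP; split_ifs with h
  · subst h; simp [hx1, hz]
  · have hpos : 0 < a := lt_of_le_of_ne ha (Ne.symm h)
    constructor
    · intro hle
      refine le_min hx1 ((le_div_iff₀ hpos).2 ?_)
      linarith [mul_comm a x]
    · intro hle
      have h2 : x ≤ z / a := le_trans hle (min_le_right _ _)
      have := (le_div_iff₀ hpos).1 h2
      linarith [mul_comm a x]

theorem stmt13 (n m : ℕ) (hn : 1 ≤ n) (hm : 1 ≤ m)
    (ap am : Fin n → Fin m → ℝ) (b : Fin n → ℝ)
    (hap : ∀ i j, ap i j ∈ Icc (0:ℝ) 1) (ham : ∀ i j, am i j ∈ Icc (0:ℝ) 1)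
    (hb : ∀ i, b i ∈ Ioc (0:ℝ) 1) :
    (∃ x : Fin m → ℝ, (∀ j, x j ∈ Icc (0:ℝ) 1) ∧
      ∀ i, bSup hm (fun j => (ap i j * x j) ⊔ (am i j * nP (x j))) = b i) ↔
    (∃ Jp Jm : Finset (Fin m), Disjoint Jp Jm ∧
      ∀ i, (∃ j ∈ Jp, b i ≤ ap i j ∧
              ∀ h, resP (b i) (ap i j) ≤ resP (b h) (ap h j)) ∨
           (∃ j ∈ Jm, am i j = b i ∧ ∀ h, am h j ≤ b h)) := by
  classical
  constructor
  · rintro ⟨x, hx, hsol⟩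
    refine ⟨Finset.univ.filter (fun j => x j ≠ 0),
            Finset.univ.filter (fun j => x j = 0), ?_, ?_⟩
    · rw [Finset.disjoint_left]; intro j hj hj'
      simp only [Finset.mem_filter] at hj hj'; exact hj.2 hj'.2
    · intro i
      have hle : ∀ h j', (ap h j' * x j') ⊔ (am h j' * nP (x j')) ≤ b h := by
        intro h j'
        rw [← hsol h]
        exact Finset.le_sup' (fun j' => (ap h j' * x j') ⊔ (am h j' * nP (x j')))
          (Finset.mem_univ j')
      obtain ⟨j, -, hj⟩ := Finset.exists_mem_eq_sup' (⟨⟨0, hm⟩, Finset.mem_univ _⟩ :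
        (Finset.univ : Finset (Fin m)).Nonempty) (fun j => (ap i j * x j) ⊔ (am i j * nP (x j)) : Fin m → ℝ)
      have hbi : (ap i j * x j) ⊔ (am i j * nP (x j)) = b i := by
        rw [← hsol i]; exact hj.symm
      by_cases hxj : x j = 0
      · right
        refine ⟨j, by simp [hxj], ?_, ?_⟩
        · rw [hxj, show nP (0:ℝ) = 1 from by simp [nP], mul_zero, mul_one,
            max_eq_right (ham i j).1] at hbi
          exact hbi
        · intro h
          have h1 : am h j * nP (x j) ≤ b h := le_trans (le_max_right _ _) (hle h j)
          simpa [nP, hxj] using h1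
      · left
        have hnP : nP (x j) = 0 := by simp [nP, hxj]
        have hxpos : 0 < x j := lt_of_le_of_ne (hx j).1 (Ne.symm hxj)
        have hprod : ap i j * x j = b i := by
          rw [hnP, mul_zero] at hbi
          rwa [max_eq_left (mul_nonneg (hap i j).1 (hx j).1)] at hbi
        have hapos : 0 < ap i j := by
          rcases lt_or_eq_of_le (hap i j).1 with h | h
          · exact h
          · exfalso; rw [← h, zero_mul] at hprod; exact absurd hprod.symm (ne_of_gt (hb i).1)
        have hble : b i ≤ ap i j := by nlinarith [(hx j).2, (hb i).1]
        have hres : resP (b i) (ap i j) = x j := by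
          unfold resP
          rw [if_neg (ne_of_gt hapos)]
          have : b i / ap i j = x j := by field_simp [← hprod, mul_comm]; exact hprod.symm
          rw [this, min_eq_right (hx j).2]
        refine ⟨j, by simp [hxj], hble, ?_⟩
        intro h
        rw [hres]
        have h1 : ap h j * x j ≤ b h := le_trans (le_max_left _ _) (hle h j)
        exact (resP_adj (hap h j).1 (hx j).1 (hx j).2 (hb h).1.le).1 h1
  · rintro ⟨Jp, Jm, hdisj, hcond⟩
    set Jm' : Finset (Fin m) := Jm.filter (fun j => ∀ h, am h j ≤ b h) with hJm'
    set x : Fin m → ℝ := fun j =>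
      if j ∈ Jm' then 0 else bInf hn (fun h => resP (b h) (ap h j)) with hxdef
    have hxmem : ∀ j, x j ∈ Icc (0:ℝ) 1 := by
      intro j
      simp only [hxdef]
      split
      · exact ⟨le_refl 0, zero_le_one⟩
      · constructor
        · exact Finset.le_inf' _ _ (fun h _ => resP_nonneg (hb h).1.le (hap h j).1)
        · exact le_trans (Finset.inf'_le _ (Finset.mem_univ ⟨0, hn⟩)) (resP_le_one _ _)
    have hxpos : ∀ j, j ∉ Jm' → 0 < x j := by
      intro j hj
      simp only [hxdef, if_neg hj]
      unfold bInf
      refine (Finset.lt_inf'_iff ..).2 ?_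
      exact fun h _ => resP_pos (hb h).1 (hap h j).1
    refine ⟨x, hxmem, ?_⟩
    intro i
    unfold bSup
    apply le_antisymm
    · apply Finset.sup'_le
      intro j _
      by_cases hj : j ∈ Jm'
      · have hx0 : x j = 0 := by simp [hxdef, hj]
        have ham' : am i j ≤ b i := (Finset.mem_filter.1 hj).2 i
        rw [hx0, mul_zero, show nP (0:ℝ) = 1 from by simp [nP], mul_one]
        exact max_le (hb i).1.le ham'
      · have hpos := hxpos j hj
        have hnP : nP (x j) = 0 := by simp [nP, ne_of_gt hpos]
        rw [hnP, mul_zero]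
        apply max_le _ (hb i).1.le
        have hxle : x j ≤ resP (b i) (ap i j) := by
          simp only [hxdef, if_neg hj]
          exact Finset.inf'_le _ (Finset.mem_univ i)
        exact (resP_adj (hap i j).1 (hxmem j).1 (hxmem j).2 (hb i).1.le).2 hxle
    · rcases hcond i with ⟨j, hjJp, hble, hmin⟩ | ⟨j, hjJm, heq, hall⟩
      · have hjnot : j ∉ Jm' := fun hmem =>
          (Finset.disjoint_left.1 hdisj) hjJp (Finset.mem_of_mem_filter j hmem)
        have hpos := hxpos j hjnot
        have hxval : x j = resP (b i) (ap i j) := by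
          simp only [hxdef, if_neg hjnot]
          apply le_antisymm
          · exact Finset.inf'_le _ (Finset.mem_univ i)
          · exact Finset.le_inf' _ _ (fun h _ => hmin h)
        have hapos : 0 < ap i j := lt_of_lt_of_le (hb i).1 hble
        have hres : resP (b i) (ap i j) = b i / ap i j := by
          unfold resP
          rw [if_neg (ne_of_gt hapos), min_eq_right ((div_le_one hapos).2 hble)]
        have hterm : ap i j * x j = b i := by
          rw [hxval, hres]; field_simp
        have hnP : nP (x j) = 0 := by simp [nP, ne_of_gt hpos]
        calc b i = (ap i j * x j) ⊔ (am i j * nP (x j)) := by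
              rw [hterm, hnP, mul_zero, max_eq_left (hb i).1.le]
          _ ≤ _ := Finset.le_sup' (fun j => (ap i j * x j) ⊔ (am i j * nP (x j)))
              (Finset.mem_univ j)
      · have hjmem : j ∈ Jm' := Finset.mem_filter.2 ⟨hjJm, hall⟩
        have hx0 : x j = 0 := by simp [hxdef, hjmem]
        calc b i = (ap i j * x j) ⊔ (am i j * nP (x j)) := by
              rw [hx0, mul_zero, show nP (0:ℝ) = 1 from by simp [nP], mul_one, heq,
                max_eq_right (hb i).1.le]
          _ ≤ _ := Finset.le_sup' (fun j => (ap i j * x j) ⊔ (am i j * nP (x j)))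
              (Finset.mem_univ j)
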